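/- For n ≥ 1, let P^n = {x ∈ [0,4]^n : Σ_{i∈S} x_i + Σ_{i∉S} (4 − x_i) ≥ 1/2 for all S ⊆ {1,…,n}}, so that P^n ∩ ℤ^n = {0,1,2,3,4}^n \ {0,4}^n. Then every complete branch-and-bound tree for P^n — i.e., every branch-and-bound tree with root label [0,4]^n, branching on the variables x₁,…,x_n with integer thresholds, whose leaf labels N satisfy conv(P^n ∩ ℤ^n) = conv(⋃_N N ∩ P^n) — has size at least 2·2^n − 1. -/
import Mathlib


open Set

/-- A branch-and-bound tree branching on coordinates indexed by `ι` with integer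
thresholds: each internal node records the branching coordinate and threshold. -/
inductive BBTree (ι : Type) : Type where
  | leaf : BBTree ι
  | node (i : ι) (t : ℤ) (L R : BBTree ι) : BBTree ι

/-- The size of a branch-and-bound tree: its number of leaf nodes. -/
def BBTree.size {ι : Type} : BBTree ι → ℕ
  | .leaf => 1
  | .node _ _ L R => L.size + R.size

/-- The list of leaf labels of a branch-and-bound tree, given the root label `D`:
at a node branching on coordinate `i` with threshold `t`, the left child gets
`D ∩ {y : y_i ≤ t}` and the right child gets `D ∩ {y : y_i ≥ t+1}`. -/
def BBTree.leaves {ι E : Type} (coord : ι → E → ℝ) : BBTree ι → Set E → List (Set E)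
  | .leaf, D => [D]
  | .node i t L R, D =>
      BBTree.leaves coord L (D ∩ {y | coord i y ≤ (t : ℝ)}) ++
        BBTree.leaves coord R (D ∩ {y | (t : ℝ) + 1 ≤ coord i y})


namespace Stmt15Aux
open Finset

def goodc (a b : ℤ) : Prop := (1 ≤ a ∧ b ≤ 3) ∨ b < a
def oneS (a b : ℤ) : Prop := (a = 0 ∧ 1 ≤ b ∧ b ≤ 3) ∨ (1 ≤ a ∧ a ≤ 3 ∧ b = 4)
def bothS (a b : ℤ) : Prop := a = 0 ∧ b = 4

instance (a b : ℤ) : Decidable (goodc a b) := by unfold goodc; infer_instance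
instance (a b : ℤ) : Decidable (oneS a b) := by unfold oneS; infer_instance
instance (a b : ℤ) : Decidable (bothS a b) := by unfold bothS; infer_instance

variable {n : ℕ}

def Kf (l u : Fin n → ℤ) : ℕ := ∑ j, if oneS (l j) (u j) then 1 else 0
def Bf (l u : Fin n → ℤ) : ℕ := ∑ j, if bothS (l j) (u j) then 1 else 0

def Phi (l u : Fin n → ℤ) : ℕ :=
  if ∃ j, goodc (l j) (u j) then 1 else Kf l u + 2 ^ (Bf l u + 1) - 1

lemma one_le_phi (l u : Fin n → ℤ) : 1 ≤ Phi l u := by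
  unfold Phi
  split
  · exact le_refl _
  · have : 2 ≤ 2 ^ (Bf l u + 1) := by
      calc 2 = 2^1 := rfl
        _ ≤ 2 ^ (Bf l u + 1) := Nat.pow_le_pow_right (by omega) (by omega)
    omega

lemma phi_good (l u : Fin n → ℤ) (j : Fin n) (hj : goodc (l j) (u j)) : Phi l u = 1 := by
  unfold Phi; rw [if_pos ⟨j, hj⟩]

lemma phi_bad (l u : Fin n → ℤ) (h : ∀ j, ¬ goodc (l j) (u j)) :
    Phi l u = Kf l u + 2 ^ (Bf l u + 1) - 1 := by
  unfold Phi; rw [if_neg]; push_neg; exact h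

lemma sum_split (P : ℤ → ℤ → Prop) [∀ a b : ℤ, Decidable (P a b)] (l u : Fin n → ℤ) (i : Fin n) :
    (∑ j, if P (l j) (u j) then 1 else 0 : ℕ) =
      (if P (l i) (u i) then 1 else 0) + ∑ j ∈ univ.erase i, (if P (l j) (u j) then 1 else 0) :=
  (Finset.add_sum_erase _ _ (mem_univ i)).symm

lemma sum_update_u (P : ℤ → ℤ → Prop) [∀ a b : ℤ, Decidable (P a b)] (l u : Fin n → ℤ)
    (i : Fin n) (c : ℤ) :
    (∑ j, if P (l j) (Function.update u i c j) then 1 else 0 : ℕ) =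
      (if P (l i) c then 1 else 0) + ∑ j ∈ univ.erase i, (if P (l j) (u j) then 1 else 0) := by
  rw [sum_split (fun a b => P a b) l (Function.update u i c) i, Function.update_self]
  congr 1
  exact Finset.sum_congr rfl fun j hj => by rw [Function.update_of_ne (mem_erase.mp hj).1]

lemma sum_update_l (P : ℤ → ℤ → Prop) [∀ a b : ℤ, Decidable (P a b)] (l u : Fin n → ℤ)
    (i : Fin n) (a : ℤ) :
    (∑ j, if P (Function.update l i a j) (u j) then 1 else 0 : ℕ) =
      (if P a (u i) then 1 else 0) + ∑ j ∈ univ.erase i, (if P (l j) (u j) then 1 else 0) := by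
  rw [sum_split (fun a b => P a b) (Function.update l i a) u i, Function.update_self]
  congr 1
  exact Finset.sum_congr rfl fun j hj => by rw [Function.update_of_ne (mem_erase.mp hj).1]


/-- The key branching inequality for the potential. -/
lemma key (l u : Fin n → ℤ) (hl : ∀ j, 0 ≤ l j) (hu : ∀ j, u j ≤ 4) (i : Fin n) (t : ℤ) :
    Phi l u ≤ Phi l (Function.update u i (min (u i) t)) +
      Phi (Function.update l i (max (l i) (t + 1))) u := by
  by_cases hg : ∃ j, goodc (l j) (u j)
  · obtain ⟨j, hj⟩ := hg
    rw [phi_good l u j hj]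
    have := one_le_phi l (Function.update u i (min (u i) t))
    have := one_le_phi (Function.update l i (max (l i) (t + 1))) u
    omega
  push_neg at hg
  set ra : ℕ := ∑ j ∈ univ.erase i, (if oneS (l j) (u j) then 1 else 0) with hra
  set rb : ℕ := ∑ j ∈ univ.erase i, (if bothS (l j) (u j) then 1 else 0) with hrb
  have hfa : 0 ≤ l i := hl i
  have hfc : u i ≤ 4 := hu i
  have hac : ¬ goodc (l i) (u i) := hg i
  have hac1 : l i ≤ u i := by by_contra hcon; exact hac (Or.inr (by omega))
  have hac2 : l i = 0 ∨ u i = 4 := by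
    by_contra hcon; push_neg at hcon; exact hac (Or.inl (by omega))
  have philB : ∀ c' : ℤ, ¬ goodc (l i) c' →
      Phi l (Function.update u i c') =
        ((if oneS (l i) c' then 1 else 0) + ra) + 2 ^ (((if bothS (l i) c' then 1 else 0) + rb) + 1) - 1 := by
    intro c' hc'
    rw [phi_bad]
    · unfold Kf Bf
      rw [sum_update_u oneS l u i c', sum_update_u bothS l u i c']
    · intro j
      by_cases hji : j = i
      · subst hji; rwa [Function.update_self]
      · rw [Function.update_of_ne hji]; exact hg j
  have phirB : ∀ a' : ℤ, ¬ goodc a' (u i) →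
      Phi (Function.update l i a') u =
        ((if oneS a' (u i) then 1 else 0) + ra) + 2 ^ (((if bothS a' (u i) then 1 else 0) + rb) + 1) - 1 := by
    intro a' ha'
    rw [phi_bad]
    · unfold Kf Bf
      rw [sum_update_l oneS l u i a', sum_update_l bothS l u i a']
    · intro j
      by_cases hji : j = i
      · subst hji; rwa [Function.update_self]
      · rw [Function.update_of_ne hji]; exact hg j
  have philG : ∀ c' : ℤ, goodc (l i) c' → Phi l (Function.update u i c') = 1 := by
    intro c' hc'
    exact phi_good _ _ i (by rwa [Function.update_self])
  have phirG : ∀ a' : ℤ, goodc a' (u i) → Phi (Function.update l i a') u = 1 := by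
    intro a' ha'
    exact phi_good _ _ i (by rwa [Function.update_self])
  have phiS : Phi l u = ((if oneS (l i) (u i) then 1 else 0) + ra) +
      2 ^ (((if bothS (l i) (u i) then 1 else 0) + rb) + 1) - 1 := by
    rw [phi_bad l u hg]
    unfold Kf Bf
    rw [sum_split oneS l u i, sum_split bothS l u i]
  have hpow : (2:ℕ) ≤ 2 ^ (rb + 1) := by
    calc (2:ℕ) = 2^1 := rfl
      _ ≤ 2 ^ (rb + 1) := Nat.pow_le_pow_right (by omega) (by omega)
  have hA : (2:ℕ)^(0+rb+1) = 2^(rb+1) := by norm_num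
  have hB : (2:ℕ)^(1+rb+1) = 2*2^(rb+1) := by
    rw [show 1+rb+1 = (rb+1)+1 by omega, pow_succ]; ring
  by_cases ht0 : t < l i
  · rw [philG _ (Or.inr (by omega))]
    have hmx : max (l i) (t+1) = l i := by omega
    rw [hmx, Function.update_eq_self]
    omega
  push_neg at ht0
  by_cases htc : u i ≤ t
  · have hmn : min (u i) t = u i := by omega
    rw [hmn, Function.update_eq_self]
    rw [phirG _ (by unfold goodc; omega)]
    omega
  push_neg at htc
  have hlt : l i < u i := by omega
  have hmn : min (u i) t = t := by omega
  have hmx : max (l i) (t+1) = t + 1 := by omega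
  rw [hmn, hmx]
  have hac2' : l i = 0 ∨ u i = 4 := hac2
  by_cases h0 : l i = 0
  · by_cases ht1 : t = 0
    · by_cases hc4 : u i = 4
      · -- state (0,4) both; left (0,0); right (1,4)
        rw [phiS, philB t (by unfold goodc; omega), phirB (t+1) (by unfold goodc; omega),
          if_neg (show ¬ oneS (l i) (u i) by unfold oneS; omega),
          if_pos (show bothS (l i) (u i) by unfold bothS; omega),
          if_neg (show ¬ oneS (l i) t by unfold oneS; omega),
          if_neg (show ¬ bothS (l i) t by unfold bothS; omega),
          if_pos (show oneS (t+1) (u i) by unfold oneS; omega),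
          if_neg (show ¬ bothS (t+1) (u i) by unfold bothS; omega)]
        omega
      · -- state (0,c) one0; left (0,0); right (1,c) good
        rw [phiS, philB t (by unfold goodc; omega), phirG (t+1) (by unfold goodc; omega),
          if_pos (show oneS (l i) (u i) by unfold oneS; omega),
          if_neg (show ¬ bothS (l i) (u i) by unfold bothS; omega),
          if_neg (show ¬ oneS (l i) t by unfold oneS; omega),
          if_neg (show ¬ bothS (l i) t by unfold bothS; omega)]
        omega
    · -- 1 ≤ t < u i, left (0,t) one0 bad
      by_cases hc4 : u i = 4
      · by_cases ht3 : t = 3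
        · -- right (4,4) pinned bad
          rw [phiS, philB t (by unfold goodc; omega), phirB (t+1) (by unfold goodc; omega),
            if_neg (show ¬ oneS (l i) (u i) by unfold oneS; omega),
            if_pos (show bothS (l i) (u i) by unfold bothS; omega),
            if_pos (show oneS (l i) t by unfold oneS; omega),
            if_neg (show ¬ bothS (l i) t by unfold bothS; omega),
            if_neg (show ¬ oneS (t+1) (u i) by unfold oneS; omega),
            if_neg (show ¬ bothS (t+1) (u i) by unfold bothS; omega)]
          omega
        · -- right (t+1,4) one4 bad
          rw [phiS, philB t (by unfold goodc; omega), phirB (t+1) (by unfold goodc; omega),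
            if_neg (show ¬ oneS (l i) (u i) by unfold oneS; omega),
            if_pos (show bothS (l i) (u i) by unfold bothS; omega),
            if_pos (show oneS (l i) t by unfold oneS; omega),
            if_neg (show ¬ bothS (l i) t by unfold bothS; omega),
            if_pos (show oneS (t+1) (u i) by unfold oneS; omega),
            if_neg (show ¬ bothS (t+1) (u i) by unfold bothS; omega)]
          omega
      · -- u i ≤ 3: right good
        rw [phiS, philB t (by unfold goodc; omega), phirG (t+1) (by unfold goodc; omega),
          if_pos (show oneS (l i) (u i) by unfold oneS; omega),
          if_neg (show ¬ bothS (l i) (u i) by unfold bothS; omega),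
          if_pos (show oneS (l i) t by unfold oneS; omega),
          if_neg (show ¬ bothS (l i) t by unfold bothS; omega)]
        omega
  · -- l i ≥ 1, so u i = 4; one-sided-4. left (l i, t) good since 1 ≤ l i ≤ t ≤ 3
    have h4 : u i = 4 := by omega
    have ha1 : 1 ≤ l i := by omega
    rw [phiS, philG t (by unfold goodc; omega), phirB (t+1) (by unfold goodc; omega),
      if_pos (show oneS (l i) (u i) by unfold oneS; omega),
      if_neg (show ¬ bothS (l i) (u i) by unfold bothS; omega)]
    by_cases ht3 : t = 3
    · rw [if_neg (show ¬ oneS (t+1) (u i) by unfold oneS; omega),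
        if_neg (show ¬ bothS (t+1) (u i) by unfold bothS; omega)]
      omega
    · rw [if_pos (show oneS (t+1) (u i) by unfold oneS; omega),
        if_neg (show ¬ bothS (t+1) (u i) by unfold bothS; omega)]
      omega



def boxSet (l u : Fin n → ℤ) : Set (Fin n → ℝ) :=
  {x | ∀ j, (l j : ℝ) ≤ x j ∧ x j ≤ (u j : ℝ)}

lemma box_left (l u : Fin n → ℤ) (i : Fin n) (t : ℤ) :
    boxSet l u ∩ {y : Fin n → ℝ | y i ≤ (t : ℝ)} =
      boxSet l (Function.update u i (min (u i) t)) := by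
  ext x
  simp only [boxSet, mem_inter_iff, mem_setOf_eq]
  constructor
  · rintro ⟨hb, ht⟩ j
    by_cases hji : j = i
    · subst hji
      rw [Function.update_self]
      push_cast
      exact ⟨(hb j).1, le_min (hb j).2 ht⟩
    · rw [Function.update_of_ne hji]; exact hb j
  · intro hb
    have hi := hb i
    rw [Function.update_self] at hi
    push_cast at hi
    constructor
    · intro j
      by_cases hji : j = i
      · subst hji; exact ⟨hi.1, hi.2.trans (min_le_left _ _)⟩
      · have := hb j; rwa [Function.update_of_ne hji] at this
    · exact hi.2.trans (min_le_right _ _)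

lemma box_right (l u : Fin n → ℤ) (i : Fin n) (t : ℤ) :
    boxSet l u ∩ {y : Fin n → ℝ | (t : ℝ) + 1 ≤ y i} =
      boxSet (Function.update l i (max (l i) (t + 1))) u := by
  ext x
  simp only [boxSet, mem_inter_iff, mem_setOf_eq]
  constructor
  · rintro ⟨hb, ht⟩ j
    by_cases hji : j = i
    · subst hji
      rw [Function.update_self]
      push_cast
      exact ⟨max_le (hb j).1 ht, (hb j).2⟩
    · rw [Function.update_of_ne hji]; exact hb j
  · intro hb
    have hi := hb i
    rw [Function.update_self] at hi
    push_cast at hi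
    constructor
    · intro j
      by_cases hji : j = i
      · subst hji; exact ⟨(le_max_left _ _).trans hi.1, hi.2⟩
      · have := hb j; rwa [Function.update_of_ne hji] at this
    · exact (le_max_right _ _).trans hi.1

/-- If the box is bad (no good coordinate, some movable coordinate), it contains a point of
`Pn` violating one of the depth-1 Chvátal cuts. -/
lemma bad_point (l u : Fin n → ℤ) (hl : ∀ j, 0 ≤ l j) (hu : ∀ j, u j ≤ 4)
    (hg : ∀ j, ¬ goodc (l j) (u j)) (i₀ : Fin n) (hmov : l i₀ < u i₀) :
    ∃ x ∈ boxSet l u, ((∀ j, 0 ≤ x j ∧ x j ≤ 4) ∧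
        ∀ S : Finset (Fin n), (1 / 2 : ℝ) ≤ (∑ j ∈ S, x j) + ∑ j ∈ Sᶜ, (4 - x j)) ∧
      ∃ S : Finset (Fin n), (∑ j ∈ S, x j) + ∑ j ∈ Sᶜ, (4 - x j) = 1 / 2 := by
  classical
  have hfact : ∀ j, 0 ≤ l j ∧ l j ≤ u j ∧ u j ≤ 4 ∧ (l j = 0 ∨ u j = 4) := by
    intro j
    have h := hg j
    have h1 := hl j
    have h2 := hu j
    unfold goodc at h
    push_neg at h
    exact ⟨h1, by omega, h2, by omega⟩
  set x : Fin n → ℝ := fun j =>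
    if j = i₀ then (if l j = 0 then 1/2 else 7/2) else (if l j = 0 then 0 else 4) with hxdef
  have hx4 : ∀ j, l j ≠ 0 → u j = 4 := fun j hj => by have := hfact j; omega
  have hxv : ∀ j, (l j = 0 ∧ j ≠ i₀ ∧ x j = 0) ∨ (l j = 0 ∧ j = i₀ ∧ x j = 1/2) ∨
      (l j ≠ 0 ∧ j ≠ i₀ ∧ x j = 4) ∨ (l j ≠ 0 ∧ j = i₀ ∧ x j = 7/2) := by
    intro j
    by_cases hji : j = i₀
    · subst hji
      by_cases hl0 : l j = 0
      · exact Or.inr (Or.inl ⟨hl0, rfl, by simp [hxdef, hl0]⟩)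
      · exact Or.inr (Or.inr (Or.inr ⟨hl0, rfl, by simp [hxdef, hl0]⟩))
    · by_cases hl0 : l j = 0
      · exact Or.inl ⟨hl0, hji, by simp [hxdef, hji, hl0]⟩
      · exact Or.inr (Or.inr (Or.inl ⟨hl0, hji, by simp [hxdef, hji, hl0]⟩))
  have hxbd : ∀ j, 0 ≤ x j ∧ x j ≤ 4 := by
    intro j
    rcases hxv j with ⟨_, _, h⟩ | ⟨_, _, h⟩ | ⟨_, _, h⟩ | ⟨_, _, h⟩ <;> rw [h] <;> norm_num
  have hxbox : x ∈ boxSet l u := by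
    intro j
    have hf := hfact j
    rcases hxv j with ⟨h0, hji, h⟩ | ⟨h0, hji, h⟩ | ⟨h0, hji, h⟩ | ⟨h0, hji, h⟩ <;> rw [h]
    · constructor
      · rw [h0]; norm_num
      · have : (0:ℤ) ≤ u j := by omega
        exact_mod_cast this
    · subst hji
      constructor
      · rw [h0]; norm_num
      · have : (1:ℤ) ≤ u j := by omega
        have : (1:ℝ) ≤ (u j : ℝ) := by exact_mod_cast this
        linarith
    · have h4 : u j = 4 := hx4 j h0
      constructor
      · have : l j ≤ 4 := by omega
        have : (l j : ℝ) ≤ 4 := by exact_mod_cast this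
        linarith
      · rw [h4]; norm_num
    · subst hji
      have h4 : u j = 4 := hx4 j h0
      constructor
      · have : l j ≤ 3 := by omega
        have : (l j : ℝ) ≤ 3 := by exact_mod_cast this
        linarith
      · rw [h4]; norm_num
  have hximp : ∀ j, j ≠ i₀ → (x j = 0 ∨ x j = 4) := by
    intro j hj
    rcases hxv j with ⟨_, _, h⟩ | ⟨_, hji, _⟩ | ⟨_, _, h⟩ | ⟨_, hji, _⟩
    · exact Or.inl h
    · exact absurd hji hj
    · exact Or.inr h
    · exact absurd hji hj
  have hxi₀ : x i₀ = 1/2 ∨ x i₀ = 7/2 := by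
    rcases hxv i₀ with ⟨_, hji, _⟩ | ⟨_, _, h⟩ | ⟨_, hji, _⟩ | ⟨_, _, h⟩
    · exact absurd rfl hji
    · exact Or.inl h
    · exact absurd rfl hji
    · exact Or.inr h
  refine ⟨x, hxbox, ⟨hxbd, ?_⟩, ?_⟩
  · -- x ∈ Pn : every cut value ≥ 1/2
    intro S
    have hS1 : (0:ℝ) ≤ ∑ j ∈ S, x j := Finset.sum_nonneg fun j _ => (hxbd j).1
    have hS2 : (0:ℝ) ≤ ∑ j ∈ Sᶜ, (4 - x j) := Finset.sum_nonneg fun j _ => by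
      have := (hxbd j).2; linarith
    by_cases hiS : i₀ ∈ S
    · have h1 : x i₀ ≤ ∑ j ∈ S, x j :=
        Finset.single_le_sum (fun j _ => (hxbd j).1) hiS
      have h2 : (1/2 : ℝ) ≤ x i₀ := by rcases hxi₀ with h | h <;> rw [h] <;> norm_num
      linarith
    · have hiS' : i₀ ∈ Sᶜ := Finset.mem_compl.mpr hiS
      have hnn : ∀ j ∈ Sᶜ, (0:ℝ) ≤ 4 - x j := fun j _ => by have := (hxbd j).2; linarith
      have h1 : 4 - x i₀ ≤ ∑ j ∈ Sᶜ, (4 - x j) := Finset.single_le_sum hnn hiS'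
      have h2 : (1/2 : ℝ) ≤ 4 - x i₀ := by rcases hxi₀ with h | h <;> rw [h] <;> norm_num
      linarith
  · -- the violated cut
    refine ⟨Finset.univ.filter (fun j => l j = 0), ?_⟩
    have hSc : (Finset.univ.filter (fun j => l j = 0))ᶜ = Finset.univ.filter (fun j => l j ≠ 0) := by
      ext j; simp
    rw [hSc]
    by_cases h0 : l i₀ = 0
    · have hmem : i₀ ∈ Finset.univ.filter (fun j => l j = 0) := by simp [h0]
      have hs1 : ∑ j ∈ Finset.univ.filter (fun j => l j = 0), x j = 1/2 := by
        rw [Finset.sum_eq_single_of_mem i₀ hmem]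
        · rcases hxi₀ with h | h
          · exact h
          · rcases hxv i₀ with ⟨_, hji, _⟩ | ⟨_, _, hv⟩ | ⟨hn, _, _⟩ | ⟨hn, _, _⟩
            · exact absurd rfl hji
            · exact hv
            · exact absurd h0 hn
            · exact absurd h0 hn
        · intro b hb hbne
          simp only [Finset.mem_filter] at hb
          rcases hximp b hbne with h | h
          · exact h
          · exfalso
            rcases hxv b with ⟨_, _, hv⟩ | ⟨_, hji, _⟩ | ⟨hn, _, _⟩ | ⟨hn, _, _⟩
            · rw [hv] at h; norm_num at h
            · exact hbne hji
            · exact hn hb.2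
            · exact hn hb.2
      have hs2 : ∑ j ∈ Finset.univ.filter (fun j => l j ≠ 0), (4 - x j) = 0 := by
        apply Finset.sum_eq_zero
        intro j hj
        simp only [Finset.mem_filter] at hj
        have hji : j ≠ i₀ := fun h => hj.2 (h ▸ h0)
        rcases hxv j with ⟨h0', _, _⟩ | ⟨h0', _, _⟩ | ⟨_, _, hv⟩ | ⟨_, hji', _⟩
        · exact absurd h0' hj.2
        · exact absurd h0' hj.2
        · rw [hv]; ring
        · exact absurd hji' hji
      rw [hs1, hs2]; ring
    · have hmem : i₀ ∈ Finset.univ.filter (fun j => l j ≠ 0) := by simp [h0]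
      have hs1 : ∑ j ∈ Finset.univ.filter (fun j => l j = 0), x j = 0 := by
        apply Finset.sum_eq_zero
        intro j hj
        simp only [Finset.mem_filter] at hj
        have hji : j ≠ i₀ := fun h => h0 (h ▸ hj.2)
        rcases hxv j with ⟨_, _, hv⟩ | ⟨_, hji', _⟩ | ⟨hn, _, _⟩ | ⟨hn, _, _⟩
        · exact hv
        · exact absurd hji' hji
        · exact absurd hj.2 hn
        · exact absurd hj.2 hn
      have hs2 : ∑ j ∈ Finset.univ.filter (fun j => l j ≠ 0), (4 - x j) = 1/2 := by
        rw [Finset.sum_eq_single_of_mem i₀ hmem]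
        · rcases hxv i₀ with ⟨h0', _, _⟩ | ⟨h0', _, _⟩ | ⟨_, hji, _⟩ | ⟨_, _, hv⟩
          · exact absurd h0' h0
          · exact absurd h0' h0
          · exact absurd rfl hji
          · rw [hv]; norm_num
        · intro b hb hbne
          simp only [Finset.mem_filter] at hb
          rcases hximp b hbne with h | h
          · exfalso
            rcases hxv b with ⟨h0', _, _⟩ | ⟨h0', _, _⟩ | ⟨_, _, hv⟩ | ⟨_, hji', _⟩
            · exact hb.2 h0'
            · exact hb.2 h0'
            · rw [hv] at h; norm_num at h
            · exact hbne hji'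
          · rw [h]; ring
      rw [hs1, hs2]; ring


lemma hull_half (Pn : Set (Fin n → ℝ))
    (hPn : Pn = {x | (∀ i, 0 ≤ x i ∧ x i ≤ 4) ∧
      ∀ S : Finset (Fin n), (1 / 2 : ℝ) ≤ (∑ i ∈ S, x i) + ∑ i ∈ Sᶜ, (4 - x i)})
    (S : Finset (Fin n)) :
    convexHull ℝ {x ∈ Pn | ∀ i, ∃ w : ℤ, x i = (w : ℝ)} ⊆
      {x : Fin n → ℝ | 1 ≤ (∑ i ∈ S, x i) + ∑ i ∈ Sᶜ, (4 - x i)} := by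
  apply convexHull_min
  · rintro x ⟨hxP, hxZ⟩
    choose w hw using hxZ
    have hcast : (∑ i ∈ S, x i) + ∑ i ∈ Sᶜ, (4 - x i)
        = (((∑ i ∈ S, w i) + ∑ i ∈ Sᶜ, (4 - w i) : ℤ) : ℝ) := by
      push_cast
      congr 1
      · exact Finset.sum_congr rfl fun i _ => hw i
      · exact Finset.sum_congr rfl fun i _ => by rw [hw i]
    rw [hPn] at hxP
    have h2 := hxP.2 S
    rw [hcast] at h2
    rw [Set.mem_setOf_eq, hcast]
    have hz : (0:ℤ) < (∑ i ∈ S, w i) + ∑ i ∈ Sᶜ, (4 - w i) := by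
      by_contra hcon
      push_neg at hcon
      have : (((∑ i ∈ S, w i) + ∑ i ∈ Sᶜ, (4 - w i) : ℤ) : ℝ) ≤ 0 := by exact_mod_cast hcon
      linarith
    have h1 : (1:ℤ) ≤ (∑ i ∈ S, w i) + ∑ i ∈ Sᶜ, (4 - w i) := hz
    exact_mod_cast h1
  · intro y hy z hz a b ha hb hab
    simp only [Set.mem_setOf_eq] at hy hz ⊢
    have key : (∑ i ∈ S, (a • y + b • z) i) + ∑ i ∈ Sᶜ, (4 - (a • y + b • z) i)
        = a * ((∑ i ∈ S, y i) + ∑ i ∈ Sᶜ, (4 - y i))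
          + b * ((∑ i ∈ S, z i) + ∑ i ∈ Sᶜ, (4 - z i)) := by
      simp only [Pi.add_apply, Pi.smul_apply, smul_eq_mul]
      have h4 : ∀ c, (4:ℝ) - (a * y c + b * z c) = a * (4 - y c) + b * (4 - z c) := fun c => by
        calc (4:ℝ) - (a * y c + b * z c) = (a + b) * 4 - (a * y c + b * z c) := by rw [hab]; ring
          _ = a * (4 - y c) + b * (4 - z c) := by ring
      rw [Finset.sum_congr rfl fun c _ => h4 c]
      rw [Finset.sum_add_distrib, Finset.sum_add_distrib, ← Finset.mul_sum, ← Finset.mul_sum,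
        ← Finset.mul_sum, ← Finset.mul_sum]
      ring
    rw [key]
    have k1 : a * 1 ≤ a * ((∑ i ∈ S, y i) + ∑ i ∈ Sᶜ, (4 - y i)) :=
      mul_le_mul_of_nonneg_left hy ha
    have k2 : b * 1 ≤ b * ((∑ i ∈ S, z i) + ∑ i ∈ Sᶜ, (4 - z i)) :=
      mul_le_mul_of_nonneg_left hz hb
    nlinarith

lemma phi_le_one (l u : Fin n → ℤ) (hl : ∀ j, 0 ≤ l j) (hu : ∀ j, u j ≤ 4)
    (hno : ∀ x ∈ boxSet l u, ((∀ j, 0 ≤ x j ∧ x j ≤ 4) ∧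
        ∀ S : Finset (Fin n), (1 / 2 : ℝ) ≤ (∑ j ∈ S, x j) + ∑ j ∈ Sᶜ, (4 - x j)) →
      ∀ S : Finset (Fin n), 1 ≤ (∑ j ∈ S, x j) + ∑ j ∈ Sᶜ, (4 - x j)) :
    Phi l u ≤ 1 := by
  by_cases hg : ∃ j, goodc (l j) (u j)
  · obtain ⟨j, hj⟩ := hg
    rw [phi_good l u j hj]
  push_neg at hg
  by_cases hmov : ∃ i₀, l i₀ < u i₀
  · obtain ⟨i₀, hi₀⟩ := hmov
    obtain ⟨x, hxbox, hxP, S, hS⟩ := bad_point l u hl hu hg i₀ hi₀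
    have := hno x hxbox hxP S
    rw [hS] at this
    norm_num at this
  · push_neg at hmov
    rw [phi_bad l u hg]
    have heq : ∀ j, l j = u j := by
      intro j
      have h := hg j
      have := hmov j
      unfold goodc at h
      push_neg at h
      omega
    have hK : Kf l u = 0 := by
      apply Finset.sum_eq_zero
      intro j _
      rw [if_neg]
      have := heq j
      unfold oneS
      omega
    have hB : Bf l u = 0 := by
      apply Finset.sum_eq_zero
      intro j _
      rw [if_neg]
      have := heq j
      have h := hg j
      unfold goodc at h
      push_neg at h
      unfold bothS
      omega
    rw [hK, hB]
    norm_num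

lemma main_ind (Pn : Set (Fin n → ℝ))
    (hPn : Pn = {x | (∀ i, 0 ≤ x i ∧ x i ≤ 4) ∧
      ∀ S : Finset (Fin n), (1 / 2 : ℝ) ≤ (∑ i ∈ S, x i) + ∑ i ∈ Sᶜ, (4 - x i)})
    (T : BBTree (Fin n)) :
    ∀ l u : Fin n → ℤ, (∀ j, 0 ≤ l j) → (∀ j, u j ≤ 4) →
    (∀ N ∈ T.leaves (fun i x => x i) (boxSet l u), ∀ x, x ∈ N → x ∈ Pn →
      ∀ S : Finset (Fin n), 1 ≤ (∑ j ∈ S, x j) + ∑ j ∈ Sᶜ, (4 - x j)) →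
    Phi l u ≤ T.size := by
  induction T with
  | leaf =>
    intro l u hl hu hleaf
    have hmem : boxSet l u ∈ BBTree.leaves (fun i (x : Fin n → ℝ) => x i) BBTree.leaf (boxSet l u) := by
      simp [BBTree.leaves]
    refine phi_le_one l u hl hu ?_
    intro x hx hxP S
    exact hleaf _ hmem x hx (by rw [hPn]; exact ⟨hxP.1, hxP.2⟩) S
  | node i t L R ihL ihR =>
    intro l u hl hu hleaf
    simp only [BBTree.leaves] at hleaf
    have hLs : Phi l (Function.update u i (min (u i) t)) ≤ L.size := by
      refine ihL l _ hl ?_ ?_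
      · intro j
        by_cases hji : j = i
        · subst hji
          rw [Function.update_self]
          have := hu j
          omega
        · rw [Function.update_of_ne hji]; exact hu j
      · intro N hN
        refine hleaf N ?_
        refine List.mem_append_left _ ?_
        rw [box_left l u i t]
        exact hN
    have hRs : Phi (Function.update l i (max (l i) (t + 1))) u ≤ R.size := by
      refine ihR _ u ?_ hu ?_
      · intro j
        by_cases hji : j = i
        · subst hji
          rw [Function.update_self]
          have := hl j
          omega
        · rw [Function.update_of_ne hji]; exact hl j
      · intro N hN
        refine hleaf N ?_
        refine List.mem_append_right _ ?_
        rw [box_right l u i t]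
        exact hN
    have hkey := key l u hl hu i t
    show Phi l u ≤ L.size + R.size
    omega

lemma phi_root : Phi (fun _ : Fin n => (0:ℤ)) (fun _ => (4:ℤ)) = 2 * 2 ^ n - 1 := by
  unfold Phi
  rw [if_neg]
  · have hK : Kf (fun _ : Fin n => (0:ℤ)) (fun _ => (4:ℤ)) = 0 := by
      apply Finset.sum_eq_zero
      intro j _
      exact if_neg (show ¬ oneS (0:ℤ) 4 by unfold oneS; omega)
    have hB : Bf (fun _ : Fin n => (0:ℤ)) (fun _ => (4:ℤ)) = n := by
      unfold Bf
      rw [Finset.sum_congr rfl (fun j _ => if_pos (show bothS 0 4 from ⟨rfl, rfl⟩))]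
      simp
    rw [hK, hB]
    have : 2 ^ (n + 1) = 2 * 2 ^ n := by rw [pow_succ]; ring
    omega
  · push_neg
    intro j
    show ¬ goodc (0:ℤ) 4
    unfold goodc
    omega

end Stmt15Aux

/-- Let
`P^n = {x ∈ [0,4]^n : Σ_{i∈S} x_i + Σ_{i∉S}(4-x_i) ≥ 1/2 for all S}`, so that
`P^n ∩ ℤ^n = {0,1,2,3,4}^n \ {0,4}^n`.  Every complete branch-and-bound tree for
`P^n` — a tree with root label `[0,4]^n`, branching on the variables `x₁,…,x_n` with
integer thresholds, whose leaf labels `N` satisfy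
`conv(P^n ∩ ℤ^n) = conv(⋃_N N ∩ P^n)` — has size at least `2·2^n - 1`. -/
theorem stmt15 (n : ℕ) (hn : 1 ≤ n)
    (Pn : Set (Fin n → ℝ))
    (hPn : Pn = {x | (∀ i, 0 ≤ x i ∧ x i ≤ 4) ∧
      ∀ S : Finset (Fin n), (1 / 2 : ℝ) ≤ (∑ i ∈ S, x i) + ∑ i ∈ Sᶜ, (4 - x i)})
    (D₀ : Set (Fin n → ℝ)) (hD₀ : D₀ = {x | ∀ i, 0 ≤ x i ∧ x i ≤ 4})
    (T : BBTree (Fin n))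
    (hcomplete : convexHull ℝ {x ∈ Pn | ∀ i, ∃ w : ℤ, x i = (w : ℝ)} =
      convexHull ℝ (⋃ N ∈ T.leaves (fun i x => x i) D₀, N ∩ Pn)) :
    2 * 2 ^ n - 1 ≤ T.size := by
  have hD : D₀ = Stmt15Aux.boxSet (fun _ : Fin n => (0:ℤ)) (fun _ => (4:ℤ)) := by
    rw [hD₀]
    ext x
    simp [Stmt15Aux.boxSet]
  have hleaf : ∀ N ∈ T.leaves (fun i x => x i)
      (Stmt15Aux.boxSet (fun _ : Fin n => (0:ℤ)) (fun _ => (4:ℤ))), ∀ x, x ∈ N → x ∈ Pn →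
      ∀ S : Finset (Fin n), 1 ≤ (∑ j ∈ S, x j) + ∑ j ∈ Sᶜ, (4 - x j) := by
    intro N hN x hxN hxP S
    rw [← hD] at hN
    have hx1 : x ∈ ⋃ N ∈ T.leaves (fun i x => x i) D₀, N ∩ Pn :=
      Set.mem_biUnion hN ⟨hxN, hxP⟩
    have hx2 := subset_convexHull ℝ _ hx1
    rw [← hcomplete] at hx2
    exact Stmt15Aux.hull_half Pn hPn S hx2
  have := Stmt15Aux.main_ind Pn hPn T (fun _ => 0) (fun _ => 4)
    (fun _ => le_refl 0) (fun _ => le_refl 4) hleaf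
  rw [Stmt15Aux.phi_root] at this
  exact this
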